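/- arXiv:2112.07062 — 3 statements merged into one kernel-verified Lean document; each statement's English description precedes it below -/
import Mathlib

section
/- Let H be a real inner product space and let a₀, b₀, a₁, b₁ ∈ H. Then ⟨a₀ + b₀, a₁ + b₁⟩ + ⟨a₁ − a₀, a₁⟩ + ⟨b₁ − b₀, b₁⟩ ≥ (1/2)(‖a₁‖² + ‖b₁‖²) − (1/2)(‖a₀‖² + ‖b₀‖²). -/
open RealInnerProductSpace

theorem grad_div_braces_lower_bound_2d
    {H : Type*} [NormedAddCommGroup H] [InnerProductSpace ℝ H]
    (a₀ b₀ a₁ b₁ : H) :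
    ⟪a₀ + b₀, a₁ + b₁⟫ + ⟪a₁ - a₀, a₁⟫ + ⟪b₁ - b₀, b₁⟫ ≥
      (1 / 2) * (‖a₁‖ ^ 2 + ‖b₁‖ ^ 2) - (1 / 2) * (‖a₀‖ ^ 2 + ‖b₀‖ ^ 2) := by
  have h1 := norm_add_sq_real a₀ b₁
  have h2 := norm_add_sq_real b₀ a₁
  have p1 := sq_nonneg ‖a₀ + b₁‖
  have p2 := sq_nonneg ‖b₀ + a₁‖
  simp only [inner_add_left, inner_add_right, inner_sub_left, real_inner_self_eq_norm_sq,
    real_inner_comm b₀ a₁, real_inner_comm b₁ a₀] at *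
  nlinarith [real_inner_self_eq_norm_sq a₁, real_inner_self_eq_norm_sq b₁]
end

section
/- Let H be a real inner product space, let γ > 0 and α ≥ 0 be real numbers. For triples x = (a₁,b₁,c₁) and y = (a₀,b₀,c₀) of elements of H, write d(x) = a₁+b₁+c₁, d(y) = a₀+b₀+c₀, define the symmetric bilinear form B(x,y) = (γ+α)(⟨a₁,a₀⟩ + ⟨b₁,b₀⟩ + ⟨c₁,c₀⟩) − γ⟨d(x),d(y)⟩ and B*(x,y) = B(x,y) − ((α−2γ)/3)⟨d(x),d(y)⟩, with induced quadratic forms ‖x‖²_{B*} = B*(x,x). Then γ‖d(x)‖² + B(x−y, x) = (1/2)(‖x‖²_{B*} − ‖y‖²_{B*} + ‖x−y‖²_{B*}) + ((2γ−α)/6)(‖d(x)‖² − ‖d(y)‖²) + (2/3)(α − γ/2)‖d(x)‖² + ((2γ−α)/6)‖d(x) + d(y)‖². -/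
open RealInnerProductSpace

variable {H : Type*} [NormedAddCommGroup H] [InnerProductSpace ℝ H]

/-- The abstract divergence of a triple of diagonal derivative components. -/
def dDiv (x : H × H × H) : H := x.1 + x.2.1 + x.2.2

/-- The sparse grad-div bilinear form `B` of the paper. -/
noncomputable def Bform (γ α : ℝ) (x y : H × H × H) : ℝ :=
  (γ + α) * (⟪x.1, y.1⟫ + ⟪x.2.1, y.2.1⟫ + ⟪x.2.2, y.2.2⟫) -
    γ * ⟪dDiv x, dDiv y⟫

/-- The modified bilinear form `B*` of the paper. -/
noncomputable def Bstar (γ α : ℝ) (x y : H × H × H) : ℝ :=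
  Bform γ α x y - ((α - 2 * γ) / 3) * ⟪dDiv x, dDiv y⟫

theorem braces_identity_3d (γ α : ℝ) (hγ : 0 < γ) (hα : 0 ≤ α)
    (x y : H × H × H) :
    γ * ‖dDiv x‖ ^ 2 + Bform γ α (x - y) x =
      (1 / 2) * (Bstar γ α x x - Bstar γ α y y + Bstar γ α (x - y) (x - y)) +
        ((2 * γ - α) / 6) * (‖dDiv x‖ ^ 2 - ‖dDiv y‖ ^ 2) +
        (2 / 3) * (α - γ / 2) * ‖dDiv x‖ ^ 2 +
        ((2 * γ - α) / 6) * ‖dDiv x + dDiv y‖ ^ 2 := by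
  simp only [Bstar, Bform, dDiv, Prod.fst_sub, Prod.snd_sub, ← real_inner_self_eq_norm_sq,
    inner_sub_left, inner_sub_right, inner_add_left, inner_add_right]
  ring_nf
  rw [real_inner_comm x.1 y.1, real_inner_comm x.2.1 y.2.1, real_inner_comm x.2.2 y.2.2,
    real_inner_comm x.1 y.2.1, real_inner_comm x.1 y.2.2, real_inner_comm x.2.1 y.1,
    real_inner_comm x.2.1 y.2.2, real_inner_comm x.2.2 y.1, real_inner_comm x.2.2 y.2.1]
  ring
end

section
/- Let X be a finite-dimensional real inner product space, D : X → X a linear map, C > 0, c > 0, h > 0 and λ ≥ 0 real numbers, and suppose ‖v‖ ≤ C‖Dv‖ and ‖Dv‖ ≤ c·h⁻¹·‖v‖ for all v ∈ X. Then there is a unique linear map T : X → X satisfying ⟨Tw, v⟩ = ⟨w, v⟩ + λ⟨Dw, Dv⟩ for all w, v ∈ X; T is bijective, and its condition number satisfies ‖T‖·‖T⁻¹‖ ≤ (1 + λ·c²·h⁻²)/(1 + λ/C²), where ‖·‖ denotes the operator norm. -/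
open RealInnerProductSpace

theorem step2_condition_number
    {X : Type*} [NormedAddCommGroup X] [InnerProductSpace ℝ X]
    [FiniteDimensional ℝ X]
    (D : X →ₗ[ℝ] X) (C c h lam : ℝ)
    (hC : 0 < C) (hc : 0 < c) (hh : 0 < h) (hlam : 0 ≤ lam)
    (hPF : ∀ v : X, ‖v‖ ≤ C * ‖D v‖)
    (hinv : ∀ v : X, ‖D v‖ ≤ c * h⁻¹ * ‖v‖) :
    (∃! T : X →ₗ[ℝ] X, ∀ w v : X, ⟪T w, v⟫ = ⟪w, v⟫ + lam * ⟪D w, D v⟫) ∧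
      ∀ T : X →ₗ[ℝ] X, (∀ w v : X, ⟪T w, v⟫ = ⟪w, v⟫ + lam * ⟪D w, D v⟫) →
        Function.Bijective T ∧
          ∀ S : X →ₗ[ℝ] X, Function.LeftInverse S T → Function.RightInverse S T →
            ‖LinearMap.toContinuousLinearMap T‖ *
                ‖LinearMap.toContinuousLinearMap S‖ ≤
              (1 + lam * c ^ 2 * h⁻¹ ^ 2) / (1 + lam / C ^ 2) := by
  constructor
  · refine ⟨LinearMap.id + lam • (LinearMap.adjoint D ∘ₗ D), ?_, ?_⟩
    · intro w v
      simp [LinearMap.adjoint_inner_left, inner_smul_left, real_inner_smul_left,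
        inner_add_left]
    · intro T hT
      ext w
      apply ext_inner_right ℝ
      intro v
      rw [hT w v]
      simp [LinearMap.adjoint_inner_left, inner_smul_left, real_inner_smul_left,
        inner_add_left]
  · intro T hT
    have hinj : Function.Injective T := by
      rw [injective_iff_map_eq_zero]
      intro w hw
      have h1 : (0:ℝ) = ‖w‖^2 + lam * ‖D w‖^2 := by
        have := hT w w
        rw [hw] at this
        simpa [real_inner_self_eq_norm_sq] using this
      have := sq_nonneg ‖D w‖
      have hw2 : ‖w‖^2 = 0 := by nlinarith [mul_nonneg hlam (sq_nonneg ‖D w‖)]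
      have : ‖w‖ = 0 := by nlinarith [norm_nonneg w]
      exact norm_eq_zero.mp this
    refine ⟨⟨hinj, (LinearMap.injective_iff_surjective).mp hinj⟩, ?_⟩
    intro S hL hR
    have hA : (0:ℝ) ≤ 1 + lam * c ^ 2 * h⁻¹ ^ 2 := by positivity
    have hB : (0:ℝ) < 1 + lam / C ^ 2 := by positivity
    have hTnorm : ‖LinearMap.toContinuousLinearMap T‖ ≤ 1 + lam * c ^ 2 * h⁻¹ ^ 2 := by
      apply ContinuousLinearMap.opNorm_le_bound _ hA
      intro w
      simp only [LinearMap.coe_toContinuousLinearMap']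
      rcases eq_or_ne (T w) 0 with h0 | h0
      · rw [h0, norm_zero]; positivity
      · have hTw : 0 < ‖T w‖ := norm_pos_iff.mpr h0
        have h1 : ‖T w‖^2 = ⟪w, T w⟫ + lam * ⟪D w, D (T w)⟫ := by
          rw [← hT w (T w), real_inner_self_eq_norm_sq]
        have h2 : ⟪w, T w⟫ ≤ ‖w‖ * ‖T w‖ := real_inner_le_norm _ _
        have h3 : ⟪D w, D (T w)⟫ ≤ ‖D w‖ * ‖D (T w)‖ := real_inner_le_norm _ _
        have h4 := hinv w
        have h5 := hinv (T w)
        have hDw : 0 ≤ ‖D w‖ := norm_nonneg _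
        have hDTw : 0 ≤ ‖D (T w)‖ := norm_nonneg _
        have hwn : 0 ≤ ‖w‖ := norm_nonneg _
        have hch : 0 ≤ c * h⁻¹ := by positivity
        have key : ‖T w‖^2 ≤ (1 + lam * c ^ 2 * h⁻¹ ^ 2) * ‖w‖ * ‖T w‖ := by
          nlinarith [mul_le_mul h4 h5 hDTw (mul_nonneg hch hwn),
            mul_le_mul_of_nonneg_left h3 hlam]
        nlinarith
    have hSnorm : ‖LinearMap.toContinuousLinearMap S‖ ≤ (1 + lam / C ^ 2)⁻¹ := by
      apply ContinuousLinearMap.opNorm_le_bound _ (by positivity)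
      intro u
      simp only [LinearMap.coe_toContinuousLinearMap']
      set w := S u with hwdef
      have hTw : T w = u := hR u
      have h1 : ⟪u, w⟫ = ‖w‖^2 + lam * ‖D w‖^2 := by
        rw [← hTw, hT w w]; simp [real_inner_self_eq_norm_sq]
      have h2 : ⟪u, w⟫ ≤ ‖u‖ * ‖w‖ := real_inner_le_norm _ _
      have h3 := hPF w
      have hwn : 0 ≤ ‖w‖ := norm_nonneg _
      have hun : 0 ≤ ‖u‖ := norm_nonneg _
      have hDw : 0 ≤ ‖D w‖ := norm_nonneg _
      -- (1 + lam/C^2) ‖w‖^2 ≤ ‖u‖ ‖w‖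
      have key : (1 + lam / C ^ 2) * ‖w‖^2 ≤ ‖u‖ * ‖w‖ := by
        have hC2 : (0:ℝ) < C ^ 2 := by positivity
        have hb : ‖w‖^2 / C^2 ≤ ‖D w‖^2 := by
          rw [div_le_iff₀ hC2]
          nlinarith
        have : lam / C^2 * ‖w‖^2 ≤ lam * ‖D w‖^2 := by
          rw [div_mul_eq_mul_div, mul_div_assoc]
          exact mul_le_mul_of_nonneg_left hb hlam
        nlinarith
      rcases eq_or_lt_of_le hwn with h0 | h0
      · rw [← h0]; positivity
      · rw [inv_mul_eq_div, le_div_iff₀ hB]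
        nlinarith
    calc ‖LinearMap.toContinuousLinearMap T‖ * ‖LinearMap.toContinuousLinearMap S‖
        ≤ (1 + lam * c ^ 2 * h⁻¹ ^ 2) * (1 + lam / C ^ 2)⁻¹ :=
          mul_le_mul hTnorm hSnorm (norm_nonneg _) hA
      _ = (1 + lam * c ^ 2 * h⁻¹ ^ 2) / (1 + lam / C ^ 2) := (div_eq_mul_inv _ _).symm
end
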